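/- Let R be a *-ring and let a ∈ R be both group invertible and Moore–Penrose invertible. Then a is an SEP element if and only if a · a(a#)*a⁺ = a · a⁺a² (i.e. a(a#)*a⁺ and a⁺a² are left a-equivalent). -/
import Mathlib

theorem mp_unique_aux {R : Type*} [Ring R] [StarRing R] (a b c : R)
    (hb1 : a*b*a = a) (hb2 : b*a*b = b) (hb3 : star (a*b) = a*b) (hb4 : star (b*a) = b*a)
    (hc1 : a*c*a = a) (hc2 : c*a*c = c) (hc3 : star (a*c) = a*c) (hc4 : star (c*a) = c*a) :
    b = c := by
  have hab : a*b = a*c := by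
    calc a*b = star (a*b) := hb3.symm
    _ = star ((a*c)*(a*b)) := by rw [show (a*c)*(a*b) = (a*c*a)*b by noncomm_ring, hc1]
    _ = star (a*b) * star (a*c) := by rw [star_mul]
    _ = (a*b)*(a*c) := by rw [hb3, hc3]
    _ = (a*b*a)*c := by noncomm_ring
    _ = a*c := by rw [hb1]
  have hba : b*a = c*a := by
    calc b*a = star (b*a) := hb4.symm
    _ = star ((b*a)*(c*a)) := by rw [show (b*a)*(c*a) = b*(a*c*a) by noncomm_ring, hc1]
    _ = star (c*a) * star (b*a) := by rw [star_mul]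
    _ = (c*a)*(b*a) := by rw [hb4, hc4]
    _ = c*(a*b*a) := by noncomm_ring
    _ = c*a := by rw [hb1]
  calc b = b*a*b := hb2.symm
  _ = (c*a)*b := by rw [show b*a*b = (b*a)*b from rfl, hba]
  _ = c*(a*b) := by rw [mul_assoc]
  _ = c*(a*c) := by rw [hab]
  _ = c*a*c := (mul_assoc c a c).symm
  _ = c := hc2

theorem stmt_15 (R : Type*) [Ring R] [StarRing R] (a ap ag : R)
    (h1 : a * ap * a = a) (h2 : ap * a * ap = ap)
    (h3 : star (a * ap) = a * ap) (h4 : star (ap * a) = ap * a)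
    (g1 : a * ag * a = a) (g2 : ag * a * ag = ag) (g3 : a * ag = ag * a) :
    (star a = ap ∧ ap = ag) ↔ a * (a * star ag * ap) = a * (ap * a * a) := by
  have k1 : ag*a*a = a := by rw [← g3]; exact g1
  have k2 : a*a*ag = a := by rw [mul_assoc, g3, ← mul_assoc]; exact g1
  have k3 : ag*ag*a = ag := by rw [mul_assoc, ← g3, ← mul_assoc]; exact g2
  constructor
  · rintro ⟨hs, hpg⟩
    have hstarag : star ag = a := by rw [← hpg, ← hs, star_star]
    rw [hpg, hstarag, k1, k2]
  · intro H
    have H' : a*a*star ag*ap = a*a := by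
      calc a*a*star ag*ap = a*(a*star ag*ap) := by noncomm_ring
      _ = a*(ap*a*a) := H
      _ = (a*ap*a)*a := by noncomm_ring
      _ = a*a := by rw [h1]
    have hA : a*a*a*ap = a*a := by
      calc a*a*a*ap = (a*a)*(a*ap) := by noncomm_ring
      _ = (a*a*star ag*ap)*(a*ap) := by rw [H']
      _ = a*a*star ag*(ap*a*ap) := by noncomm_ring
      _ = a*a*star ag*ap := by rw [h2]
      _ = a*a := H'
    have hE : ag*a = a*ap := by
      calc ag*a = (ag*ag*a)*a := by rw [k3]
      _ = ag*ag*(a*a) := by noncomm_ring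
      _ = ag*ag*(a*a*a*ap) := by rw [hA]
      _ = (ag*ag*a)*(a*a*ap) := by noncomm_ring
      _ = ag*(a*a*ap) := by rw [k3]
      _ = (ag*a*a)*ap := by noncomm_ring
      _ = a*ap := by rw [k1]
    have hgadj : star (ag*a) = ag*a := by rw [hE]; exact h3
    have hgadj2 : star (a*ag) = a*ag := by rw [g3]; exact hgadj
    have hpg : ap = ag := mp_unique_aux a ap ag h1 h2 h3 h4 g1 g2 hgadj2 hgadj
    have H'' : a*a*star ag*ag = a*a := by rw [hpg] at H'; exact H'
    have key1 : ag*a*star ag*ag = ag*a := by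
      calc ag*a*star ag*ag = (ag*ag*a)*a*star ag*ag := by rw [k3]
      _ = ag*ag*(a*a*star ag*ag) := by noncomm_ring
      _ = ag*ag*(a*a) := by rw [H'']
      _ = (ag*ag*a)*a := by noncomm_ring
      _ = ag*a := by rw [k3]
    have key2 : ag*a*star ag*(ag*a) = a := by
      calc ag*a*star ag*(ag*a) = (ag*a*star ag*ag)*a := by noncomm_ring
      _ = ag*a*a := by rw [key1]
      _ = a := k1
    have hstar : star a = ag := by
      calc star a = star (ag*a*star ag*(ag*a)) := by rw [key2]
      _ = star (ag*a) * (star (star ag) * star (ag*a)) := by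
            rw [star_mul (ag*a*star ag) (ag*a), star_mul (ag*a) (star ag)]
      _ = ag*a * (ag * (ag*a)) := by rw [hgadj, star_star]
      _ = (ag*a*ag)*(ag*a) := by noncomm_ring
      _ = ag*(ag*a) := by rw [g2]
      _ = ag*ag*a := by noncomm_ring
      _ = ag := k3
    exact ⟨by rw [hpg]; exact hstar, hpg⟩
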